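/- arXiv:2408.04221 — 2 statements merged into one kernel-verified Lean document; each statement's English description precedes it below -/
import Mathlib

section
/- Let X ~ N(α(t)x, σ(t)² I) in ℝ^d and, given X = z_t, let Y have distribution N(α(s)x + sqrt(σ(s)² − β²)·(z_t − α(t)x)/σ(t), β² I), where 0 < β² ≤ σ(s)² and σ(t) > 0. Then Y ~ N(α(s)x, σ(s)² I). -/
open MeasureTheory ProbabilityTheory
open Real


lemma key_ident (a b z : ℝ) (hb : b ≠ 0) (y : ℝ) :
    gaussianPDFReal 0 1 y * gaussianPDFReal (a*y) (NNReal.mk (b^2) (sq_nonneg b)) z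
      = ((Real.sqrt (2*π*1))⁻¹ * (Real.sqrt (2*π*b^2))⁻¹ * rexp (-z^2/(2*(a^2+b^2))))
        * rexp (-((a^2+b^2)/(2*b^2)) * (y - a*z/(a^2+b^2))^2) := by
  have hv : a^2 + b^2 ≠ 0 := by positivity
  have hb2 : (b:ℝ)^2 ≠ 0 := pow_ne_zero _ hb
  simp only [gaussianPDFReal, NNReal.coe_mk, NNReal.coe_one, sub_zero]
  rw [mul_mul_mul_comm, ← Real.exp_add, mul_assoc (_ * _), ← Real.exp_add]
  congr 2
  field_simp
  ring

lemma key_integral (a b z : ℝ) (hb : b ≠ 0) :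
    ∫ y, gaussianPDFReal 0 1 y * gaussianPDFReal (a*y) (NNReal.mk (b^2) (sq_nonneg b)) z
      = gaussianPDFReal 0 (NNReal.mk (a^2+b^2) (by positivity)) z := by
  have hv : (0:ℝ) < a^2 + b^2 := by positivity
  have hc : (0:ℝ) < (a^2+b^2)/(2*b^2) := by positivity
  simp_rw [key_ident a b z hb]
  rw [integral_const_mul]
  rw [integral_sub_right_eq_self (μ := volume)
      (fun y => rexp (-((a^2+b^2)/(2*b^2)) * y^2)) (a*z/(a^2+b^2))]
  rw [integral_gaussian]
  have h1 : π / ((a^2+b^2)/(2*b^2)) = (2*π*b^2) / (a^2+b^2) := by field_simp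
  rw [h1, Real.sqrt_div (by positivity)]
  have h2 : Real.sqrt (2*π*b^2) ≠ 0 := by positivity
  have h3 : Real.sqrt (2*π*1) * Real.sqrt (a^2+b^2) = Real.sqrt (2*π*(a^2+b^2)) := by
    rw [← Real.sqrt_mul (by positivity)]; ring_nf
  simp only [gaussianPDFReal, NNReal.coe_mk, sub_zero]
  field_simp
  rw [← Real.sqrt_mul (by positivity)]

lemma key_integrable (a b z : ℝ) (hb : b ≠ 0) :
    Integrable (fun y => gaussianPDFReal 0 1 y * gaussianPDFReal (a*y) (NNReal.mk (b^2) (sq_nonneg b)) z) := by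
  have hc : (0:ℝ) < (a^2+b^2)/(2*b^2) := by positivity
  have := ((integrable_exp_neg_mul_sq hc).comp_sub_right (a*z/(a^2+b^2))).const_mul
    ((Real.sqrt (2*π*1))⁻¹ * (Real.sqrt (2*π*b^2))⁻¹ * rexp (-z^2/(2*(a^2+b^2))))
  simp_rw [key_ident a b z hb]
  exact this

lemma key_lintegral (a b z : ℝ) (hb : b ≠ 0) :
    ∫⁻ y, gaussianPDF 0 1 y * gaussianPDF (a*y) (NNReal.mk (b^2) (sq_nonneg b)) z
      = gaussianPDF 0 (NNReal.mk (a^2+b^2) (by positivity)) z := by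
  have h1 : ∀ y, gaussianPDF 0 1 y * gaussianPDF (a*y) (NNReal.mk (b^2) (sq_nonneg b)) z
      = ENNReal.ofReal (gaussianPDFReal 0 1 y * gaussianPDFReal (a*y) (NNReal.mk (b^2) (sq_nonneg b)) z) := by
    intro y
    rw [gaussianPDF, gaussianPDF, ← ENNReal.ofReal_mul (gaussianPDFReal_nonneg _ _ _)]
  simp_rw [h1]
  rw [← ofReal_integral_eq_lintegral_ofReal (key_integrable a b z hb)
      (ae_of_all _ fun y => mul_nonneg (gaussianPDFReal_nonneg _ _ _) (gaussianPDFReal_nonneg _ _ _))]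
  rw [key_integral a b z hb]
  rfl

lemma gaussian_conv (a b : ℝ) (hb : b ≠ 0) :
    Measure.map (fun q : ℝ × ℝ => a * q.1 + b * q.2)
        ((gaussianReal 0 1).prod (gaussianReal 0 1))
      = gaussianReal 0 (NNReal.mk (a^2+b^2) (by positivity)) := by
  have hb2 : ((NNReal.mk (b^2) (sq_nonneg b)) : NNReal) ≠ 0 := by
    simp [← NNReal.coe_inj, pow_ne_zero _ hb]
  have hv : ((NNReal.mk (a^2+b^2) (by positivity)) : NNReal) ≠ 0 := by
    simp [← NNReal.coe_inj]
    positivity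
  have hF : Measurable fun q : ℝ × ℝ => a * q.1 + b * q.2 :=
    (measurable_fst.const_mul a).add (measurable_snd.const_mul b)
  have hmapy : ∀ y : ℝ, Measure.map (fun z => a * y + b * z) (gaussianReal 0 1)
      = gaussianReal (a*y) (NNReal.mk (b^2) (sq_nonneg b)) := by
    intro y
    rw [show (fun z : ℝ => a * y + b * z) = (fun w => w + a * y) ∘ (b * ·) by
      funext z; simp [add_comm]]
    rw [← Measure.map_map (measurable_add_const _) (measurable_const_mul b),
      gaussianReal_map_const_mul, gaussianReal_map_add_const]
    norm_num
  have hker : Measurable (Function.uncurry fun y z => gaussianPDF (a*y) (NNReal.mk (b^2) (sq_nonneg b)) z) := by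
    simp only [gaussianPDF, gaussianPDFReal, Function.uncurry]
    fun_prop
  ext s hs
  rw [Measure.map_apply hF hs, Measure.prod_apply (hF hs)]
  have hsec : ∀ y : ℝ, (Prod.mk y ⁻¹' ((fun q : ℝ × ℝ => a * q.1 + b * q.2) ⁻¹' s))
      = (fun z => a * y + b * z) ⁻¹' s := fun y => rfl
  simp_rw [hsec, fun y : ℝ => (Measure.map_apply ((measurable_const_mul b).const_add (a*y)) hs
      ▸ congrArg (fun m => m s) (hmapy y) :
        gaussianReal 0 1 ((fun z => a * y + b * z) ⁻¹' s) = gaussianReal (a*y) (NNReal.mk (b^2) (sq_nonneg b)) s),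
    fun y : ℝ => gaussianReal_apply (a*y) hb2 s]
  rw [gaussianReal_of_var_ne_zero 0 one_ne_zero,
    lintegral_withDensity_eq_lintegral_mul _ (measurable_gaussianPDF 0 1)
      (Measurable.lintegral_prod_right hker)]
  simp only [Pi.mul_apply]
  have hswap : ∫⁻ y, gaussianPDF 0 1 y * ∫⁻ z in s, gaussianPDF (a*y) (NNReal.mk (b^2) (sq_nonneg b)) z
      = ∫⁻ z in s, ∫⁻ y, gaussianPDF 0 1 y * gaussianPDF (a*y) (NNReal.mk (b^2) (sq_nonneg b)) z := by
    have : ∀ y, gaussianPDF 0 1 y * ∫⁻ z in s, gaussianPDF (a*y) (NNReal.mk (b^2) (sq_nonneg b)) z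
        = ∫⁻ z in s, gaussianPDF 0 1 y * gaussianPDF (a*y) (NNReal.mk (b^2) (sq_nonneg b)) z := by
      intro y
      rw [lintegral_const_mul _ (measurable_gaussianPDF _ _)]
    simp_rw [this]
    exact lintegral_lintegral_swap (((measurable_gaussianPDF 0 1).comp measurable_fst).mul
      hker).aemeasurable
  rw [hswap]
  simp_rw [fun z => key_lintegral a b z hb]
  exact (gaussianReal_apply 0 hv s).symm


/-- The standard Gaussian measure on `ℝ^d`. -/
noncomputable def stdGaussian (d : ℕ) : Measure (Fin d → ℝ) :=
  Measure.pi fun _ => gaussianReal 0 1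

lemma stdGaussian_map (d : ℕ) (a b c : ℝ) (hb : b ≠ 0) (h : a^2 + b^2 = c^2) :
    Measure.map (fun p : (Fin d → ℝ) × (Fin d → ℝ) => a • p.1 + b • p.2)
        ((stdGaussian d).prod (stdGaussian d))
      = Measure.map (fun z : Fin d → ℝ => c • z) (stdGaussian d) := by
  have hF : Measurable fun p : (Fin d → ℝ) × (Fin d → ℝ) => a • p.1 + b • p.2 := by
    fun_prop
  have h2 : Measure.map (fun z : Fin d → ℝ => c • z) (stdGaussian d)
      = Measure.pi fun _ : Fin d => gaussianReal 0 (NNReal.mk (c^2) (sq_nonneg c)) := by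
    have := (measurePreserving_pi (fun _ : Fin d => gaussianReal 0 1)
      (fun _ : Fin d => gaussianReal 0 (NNReal.mk (c^2) (sq_nonneg c)))
      (fun _ => ⟨measurable_const_mul c, by rw [gaussianReal_map_const_mul]; norm_num⟩)).map_eq
    rw [← this]
    rfl
  have he := measurePreserving_arrowProdEquivProdArrow ℝ ℝ (Fin d)
    (fun _ => gaussianReal 0 1) (fun _ => gaussianReal 0 1)
  rw [h2]
  show Measure.map _ ((Measure.pi fun _ : Fin d => gaussianReal 0 1).prod
    (Measure.pi fun _ : Fin d => gaussianReal 0 1)) = _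
  rw [← he.map_eq, Measure.map_map hF (MeasurableEquiv.measurable _)]
  have hcomp : ((fun p : (Fin d → ℝ) × (Fin d → ℝ) => a • p.1 + b • p.2)
      ∘ (MeasurableEquiv.arrowProdEquivProdArrow ℝ ℝ (Fin d)))
      = fun (f : Fin d → ℝ × ℝ) i => (fun q : ℝ × ℝ => a * q.1 + b * q.2) (f i) := rfl
  rw [hcomp]
  have hg : MeasurePreserving (fun q : ℝ × ℝ => a * q.1 + b * q.2)
      ((gaussianReal 0 1).prod (gaussianReal 0 1)) (gaussianReal 0 (NNReal.mk (c^2) (sq_nonneg c))) :=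
    ⟨(measurable_fst.const_mul a).add (measurable_snd.const_mul b), by
      rw [gaussian_conv a b hb]; congr 1; exact Subtype.ext h⟩
  exact (measurePreserving_pi _ _ fun _ => hg).map_eq

/-- If `X ~ N(α(t) x, σ(t)² I)` (represented as `X = α(t)•x + σ(t)•ε₁` with `ε₁` standard
Gaussian), and given `X = z_t` the variable `Y` is
`N(α(s)•x + sqrt(σ(s)² - β²)•(z_t - α(t)•x)/σ(t), β² I)` (represented via an independent
standard Gaussian `ε₂`), then the marginal law of `Y` is `N(α(s) x, σ(s)² I)`. -/
theorem stmt5 (d : ℕ) (x : Fin d → ℝ) (αs αt σs σt β : ℝ)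
    (hσt : 0 < σt) (hσs : 0 < σs) (hβ : 0 < β) (hβσ : β ≤ σs) :
    Measure.map
        (fun p : (Fin d → ℝ) × (Fin d → ℝ) =>
          αs • x + (Real.sqrt (σs ^ 2 - β ^ 2) / σt) • ((αt • x + σt • p.1) - αt • x)
            + β • p.2)
        ((stdGaussian d).prod (stdGaussian d))
      = Measure.map (fun z => αs • x + σs • z) (stdGaussian d) := by
  have ha : Real.sqrt (σs^2-β^2) ^ 2 + β^2 = σs^2 := by
    rw [Real.sq_sqrt (by nlinarith : (0:ℝ) ≤ σs^2 - β^2)]; ring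
  have hfun : (fun p : (Fin d → ℝ) × (Fin d → ℝ) =>
      αs • x + (Real.sqrt (σs ^ 2 - β ^ 2) / σt) • ((αt • x + σt • p.1) - αt • x) + β • p.2)
      = (fun y => αs • x + y) ∘ (fun p : (Fin d → ℝ) × (Fin d → ℝ) =>
          Real.sqrt (σs^2-β^2) • p.1 + β • p.2) := by
    funext p
    simp only [Function.comp_apply, add_sub_cancel_left, smul_smul,
      div_mul_cancel₀ _ hσt.ne']
    rw [add_assoc]
  have hfun2 : (fun z : Fin d → ℝ => αs • x + σs • z)
      = (fun y => αs • x + y) ∘ (fun z : Fin d → ℝ => σs • z) := rfl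
  have hF1 : Measurable fun p : (Fin d → ℝ) × (Fin d → ℝ) =>
      Real.sqrt (σs^2-β^2) • p.1 + β • p.2 := by fun_prop
  have hF2 : Measurable fun z : Fin d → ℝ => σs • z := by fun_prop
  have hadd : Measurable fun y : Fin d → ℝ => αs • x + y := by fun_prop
  rw [hfun, hfun2, ← Measure.map_map hadd hF1, ← Measure.map_map hadd hF2,
    stdGaussian_map d _ β σs hβ.ne' ha]
end

section
/- Let Z = a·X + c·ε with X an ℝ^d-valued random variable with density, ε ~ N(0, I_d) independent of X, and a, c > 0. Then the score of the marginal density p of Z satisfies ∇_z log p(z) = (a/c²) E[X | Z = z] − z/c² (Tweedie's formula). -/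
open Real MeasureTheory

private lemma tail_bound' {c t : ℝ} (hc : 0 < c) (ht : 0 ≤ t) :
    t * Real.exp (-t ^ 2 / (2 * c ^ 2)) ≤ 2 * c := by
  rcases le_or_gt t (2 * c) with h | h
  · have h1 : Real.exp (-t ^ 2 / (2 * c ^ 2)) ≤ 1 := by
      apply Real.exp_le_one_iff.mpr
      have h2 : (0:ℝ) < 2 * c ^ 2 := by positivity
      apply div_nonpos_of_nonpos_of_nonneg (by nlinarith [sq_nonneg t]) h2.le
    nlinarith
  · have ht0 : 0 < t := lt_trans (by positivity) h
    have hs : 0 < t ^ 2 / (2 * c ^ 2) := div_pos (pow_pos ht0 2) (by positivity)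
    have he : t ^ 2 / (2 * c ^ 2) ≤ Real.exp (t ^ 2 / (2 * c ^ 2)) := by
      linarith [Real.add_one_le_exp (t ^ 2 / (2 * c ^ 2))]
    have hle : Real.exp (-t ^ 2 / (2 * c ^ 2)) ≤ (t ^ 2 / (2 * c ^ 2))⁻¹ := by
      rw [show -t ^ 2 / (2 * c ^ 2) = -(t ^ 2 / (2 * c ^ 2)) by ring, Real.exp_neg]
      exact inv_anti₀ hs he
    calc t * Real.exp (-t ^ 2 / (2 * c ^ 2)) ≤ t * (t ^ 2 / (2 * c ^ 2))⁻¹ :=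
          mul_le_mul_of_nonneg_left hle ht0.le
      _ = 2 * c ^ 2 / t := by field_simp
      _ ≤ 2 * c := by rw [div_le_iff₀ ht0]; nlinarith

private lemma phi_fderiv' {d : ℕ} (a c C : ℝ) (hc : 0 < c) (x w : EuclideanSpace ℝ (Fin d)) :
    HasFDerivAt (fun w' => C * Real.exp (-‖w' - a • x‖ ^ 2 / (2 * c ^ 2)))
      (innerSL ℝ ((-(c ^ 2)⁻¹ * (C * Real.exp (-‖w - a • x‖ ^ 2 / (2 * c ^ 2)))) • (w - a • x))) w := by
  have h1 : HasFDerivAt (fun w' : EuclideanSpace ℝ (Fin d) => w' - a • x)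
      (ContinuousLinearMap.id ℝ (EuclideanSpace ℝ (Fin d))) w :=
    (hasFDerivAt_id w).sub_const _
  have h2 := h1.norm_sq
  have h3 := h2.const_mul (-(2 * c ^ 2)⁻¹)
  have h4 := h3.exp
  have h5 := h4.const_mul C
  have hfun : (fun w' : EuclideanSpace ℝ (Fin d) => C * Real.exp (-‖w' - a • x‖ ^ 2 / (2 * c ^ 2)))
      = fun w' => C * Real.exp (-(2 * c ^ 2)⁻¹ * ‖w' - a • x‖ ^ 2) := by
    funext w'
    congr 1
    congr 1
    ring
  rw [hfun]
  refine h5.congr_fderiv ?_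
  ext v
  have hc2 : (c:ℝ) ^ 2 ≠ 0 := by positivity
  simp [real_inner_smul_left, smul_smul]
  ring_nf

/-- Tweedie's formula: with `Z = aX + cε`, `ε ~ N(0, I_d)` independent of `X ~ μ`,
marginal density `p z = ∫ φ_c(z - a x) dμ(x)` and posterior mean
`E[X | Z = z] = (p z)⁻¹ • ∫ φ_c(z - a x) • x dμ(x)`, the score of the marginal satisfies
`∇_z log p(z) = (a/c²) E[X | Z = z] - z/c²`. -/
theorem stmt10 (d : ℕ) (μ : Measure (EuclideanSpace ℝ (Fin d)))
    [IsProbabilityMeasure μ] (hac : μ ≪ volume) (a c : ℝ) (ha : 0 < a) (hc : 0 < c)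
    (hL2 : Integrable (fun x => ‖x‖ ^ 2) μ)
    (φ : EuclideanSpace ℝ (Fin d) → ℝ)
    (hφ : ∀ w, φ w = (2 * Real.pi * c ^ 2) ^ (-(d : ℝ) / 2) *
      Real.exp (-‖w‖ ^ 2 / (2 * c ^ 2)))
    (p : EuclideanSpace ℝ (Fin d) → ℝ)
    (hp : ∀ z, p z = ∫ x, φ (z - a • x) ∂μ)
    (postMean : EuclideanSpace ℝ (Fin d) → EuclideanSpace ℝ (Fin d))
    (hpost : ∀ z, postMean z = (p z)⁻¹ • ∫ x, φ (z - a • x) • x ∂μ)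
    (z : EuclideanSpace ℝ (Fin d)) :
    gradient (fun w => Real.log (p w)) z
      = (a / c ^ 2) • postMean z - (1 / c ^ 2) • z := by
  set C : ℝ := (2 * Real.pi * c ^ 2) ^ (-(d : ℝ) / 2) with hCdef
  have hC : 0 < C := Real.rpow_pos_of_pos (by positivity) _
  -- basic facts about φ
  have hφpos : ∀ w, 0 < φ w := fun w => by rw [hφ]; positivity
  have hφleC : ∀ w, φ w ≤ C := by
    intro w
    rw [hφ]
    have h1 : Real.exp (-‖w‖ ^ 2 / (2 * c ^ 2)) ≤ 1 := by
      apply Real.exp_le_one_iff.mpr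
      apply div_nonpos_of_nonpos_of_nonneg (neg_nonpos.mpr (by positivity)) (by positivity)
    nlinarith
  have hφc : Continuous φ := by
    rw [show φ = fun w => C * Real.exp (-‖w‖ ^ 2 / (2 * c ^ 2)) from funext hφ]
    fun_prop
  have hφnorm : ∀ w, φ w * ‖w‖ ≤ C * (2 * c) := by
    intro w
    rw [hφ]
    nlinarith [tail_bound' hc (norm_nonneg w), Real.exp_pos (-‖w‖ ^ 2 / (2 * c ^ 2)),
      norm_nonneg w, hC.le]
  -- the pointwise derivative
  have hg : ∀ (x w : EuclideanSpace ℝ (Fin d)), HasFDerivAt (fun w' => φ (w' - a • x))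
      (innerSL ℝ ((-(c ^ 2)⁻¹ * φ (w - a • x)) • (w - a • x))) w := by
    intro x w
    have h := phi_fderiv' a c C hc x w
    rw [show (fun w' => φ (w' - a • x))
        = (fun w' => C * Real.exp (-‖w' - a • x‖ ^ 2 / (2 * c ^ 2))) from funext fun w' => hφ _,
      hφ]
    exact h
  -- continuity of auxiliary maps
  have hcont1 : ∀ w, Continuous (fun x : EuclideanSpace ℝ (Fin d) => φ (w - a • x)) := fun w =>
    hφc.comp (continuous_const.sub (continuous_id.const_smul a))
  -- integrabilities
  have hmeas1 : ∀ w, AEStronglyMeasurable (fun x => φ (w - a • x)) μ := fun w =>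
    (hcont1 w).aestronglyMeasurable
  have hint1 : ∀ w, Integrable (fun x => φ (w - a • x)) μ := fun w =>
    (integrable_const C).mono' (hmeas1 w) (ae_of_all μ fun x => by
      rw [Real.norm_eq_abs, abs_of_pos (hφpos _)]; exact hφleC _)
  have hnormint : Integrable (fun x : EuclideanSpace ℝ (Fin d) => ‖x‖) μ := by
    refine ((integrable_const (1:ℝ)).add hL2).mono' continuous_norm.aestronglyMeasurable
      (ae_of_all μ fun x => ?_)
    simp only [Real.norm_eq_abs, abs_norm, Pi.add_apply]
    nlinarith [norm_nonneg x, sq_nonneg (‖x‖ - 1)]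
  have hint2 : ∀ w, Integrable (fun x => φ (w - a • x) • x) μ := by
    intro w
    refine (hnormint.const_mul C).mono'
      (((hcont1 w).smul continuous_id).aestronglyMeasurable) (ae_of_all μ fun x => ?_)
    rw [norm_smul, Real.norm_eq_abs, abs_of_pos (hφpos _)]
    exact mul_le_mul_of_nonneg_right (hφleC _) (norm_nonneg x)
  have hbnd : ∀ (w x : EuclideanSpace ℝ (Fin d)),
      ‖(-(c ^ 2)⁻¹ * φ (w - a • x)) • (w - a • x)‖ ≤ (c ^ 2)⁻¹ * (C * (2 * c)) := by
    intro w x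
    rw [norm_smul, Real.norm_eq_abs, abs_mul, abs_neg, abs_inv,
      abs_of_pos (show (0:ℝ) < c ^ 2 by positivity), abs_of_pos (hφpos _)]
    rw [mul_assoc]
    exact mul_le_mul_of_nonneg_left (hφnorm _) (by positivity)
  have hcont3 : ∀ w, Continuous (fun x : EuclideanSpace ℝ (Fin d) =>
      (-(c ^ 2)⁻¹ * φ (w - a • x)) • (w - a • x)) := fun w =>
    (continuous_const.mul (hcont1 w)).smul (continuous_const.sub (continuous_id.const_smul a))
  have hint3 : ∀ w, Integrable (fun x => (-(c ^ 2)⁻¹ * φ (w - a • x)) • (w - a • x)) μ := by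
    intro w
    exact (integrable_const ((c ^ 2)⁻¹ * (C * (2 * c)))).mono'
      (hcont3 w).aestronglyMeasurable (ae_of_all μ fun x => hbnd w x)
  -- positivity of p
  have hppos : ∀ w, 0 < p w := by
    intro w
    rw [hp w]
    rw [integral_pos_iff_support_of_nonneg (fun x => (hφpos _).le) (hint1 w)]
    have hsupp : Function.support (fun x => φ (w - a • x)) = Set.univ :=
      Set.eq_univ_of_forall fun x => (hφpos _).ne'
    rw [hsupp]
    simp
  -- derivative of p under the integral sign
  have hder : HasFDerivAt (fun w => ∫ x, φ (w - a • x) ∂μ)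
      (∫ x, innerSL ℝ ((-(c ^ 2)⁻¹ * φ (z - a • x)) • (z - a • x)) ∂μ) z := by
    apply hasFDerivAt_integral_of_dominated_of_fderiv_le (bound := fun _ => (c ^ 2)⁻¹ * (C * (2 * c)))
      (Metric.ball_mem_nhds z one_pos)
      (Filter.Eventually.of_forall fun w => hmeas1 w) (hint1 z)
      (((innerSL ℝ).continuous.comp (hcont3 z)).aestronglyMeasurable)
      (ae_of_all μ fun x w _ => ?_) (integrable_const _)
      (ae_of_all μ fun x w _ => hg x w)
    rw [innerSL_apply_norm]
    exact hbnd w x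
  set G : EuclideanSpace ℝ (Fin d) :=
    ∫ x, (-(c ^ 2)⁻¹ * φ (z - a • x)) • (z - a • x) ∂μ with hGdef
  have hcomm : (∫ x, innerSL ℝ ((-(c ^ 2)⁻¹ * φ (z - a • x)) • (z - a • x)) ∂μ)
      = innerSL ℝ G :=
    ContinuousLinearMap.integral_comp_comm (innerSL ℝ) (hint3 z)
  have hpder : HasFDerivAt p (innerSL ℝ G) z := by
    rw [show p = fun w => ∫ x, φ (w - a • x) ∂μ from funext hp, ← hcomm]
    exact hder
  have hgrad : HasGradientAt p G z := by
    rw [hasGradientAt_iff_hasFDerivAt]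
    refine hpder.congr_fderiv ?_
    ext v
    rfl
  have hpz : p z ≠ 0 := (hppos z).ne'
  have hlog : HasGradientAt (fun w => Real.log (p w)) ((p z)⁻¹ • G) z := by
    rw [hasGradientAt_iff_hasFDerivAt]
    have hl : HasDerivAt Real.log (p z)⁻¹ (p z) := Real.hasDerivAt_log hpz
    have hcomp : HasFDerivAt (fun w => Real.log (p w))
        ((ContinuousLinearMap.smulRight (1 : ℝ →L[ℝ] ℝ) (p z)⁻¹).comp
          ((InnerProductSpace.toDual ℝ (EuclideanSpace ℝ (Fin d))) G)) z :=
      hl.hasFDerivAt.comp z hgrad.hasFDerivAt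
    refine hcomp.congr_fderiv ?_
    ext v
    simp only [ContinuousLinearMap.coe_comp', Function.comp_apply,
      InnerProductSpace.toDual_apply_apply, ContinuousLinearMap.smulRight_apply,
      ContinuousLinearMap.one_apply, smul_eq_mul, real_inner_smul_left]
    ring
  set I : EuclideanSpace ℝ (Fin d) := ∫ x, φ (z - a • x) • x ∂μ with hIdef
  have hGval : G = (-(c ^ 2)⁻¹) • ((p z) • z - a • I) := by
    rw [hGdef]
    rw [show (fun x => (-(c ^ 2)⁻¹ * φ (z - a • x)) • (z - a • x))
        = fun x => (-(c ^ 2)⁻¹) • (φ (z - a • x) • z - a • (φ (z - a • x) • x)) from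
      funext fun x => by rw [← smul_smul, smul_sub, smul_comm (φ (z - a • x)) a]]
    have hint2' : Integrable (fun x => a • (φ (z - a • x) • x)) μ := (hint2 z).smul a
    rw [integral_smul, integral_sub ((hint1 z).smul_const z) hint2',
      integral_smul_const, integral_smul, ← hp z]
  rw [hlog.gradient, hpost z, hGval]
  have hc2 : (c:ℝ) ^ 2 ≠ 0 := by positivity
  match_scalars
  · field_simp
  · rw [div_eq_mul_inv]
    ring
end
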